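/- Let K be a field and let V, U, W, V' be finite-dimensional K-vector spaces. Let θ : V → W and β : U → W be injective linear maps, let η : W → V' be a surjective linear map with ker η = im β, and set γ := η ∘ θ. Suppose T_V : V → V, T_U : U → U and T_W : W → W are linear automorphisms satisfying θ ∘ T_V = T_W ∘ θ and β ∘ T_U = T_W ∘ β. If dim_K U = 1 + dim_K V and trace(T_V) = trace(T_U), then γ is not the zero map; consequently dim_K (ker γ) < dim_K V and dim_K (V'/im γ) < dim_K V'. -/

import Mathlib

set_option maxHeartbeats 1000000

/-- The linear-algebra content of Theorem 3.3: if `θ : V → W` and `β : U → W` are injective,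
`η : W → V'` is surjective with `ker η = im β`, `γ = η ∘ θ`, the automorphisms `T_V, T_U, T_W`
commute with `θ` and `β`, `dim U = 1 + dim V`, and `trace T_V = trace T_U`, then `γ ≠ 0`,
`dim (ker γ) < dim V`, and `dim (V'/im γ) < dim V'`. -/
theorem stmt0 {K : Type*} [Field K]
    {V U W V' : Type*}
    [AddCommGroup V] [Module K V] [FiniteDimensional K V]
    [AddCommGroup U] [Module K U] [FiniteDimensional K U]
    [AddCommGroup W] [Module K W] [FiniteDimensional K W]
    [AddCommGroup V'] [Module K V'] [FiniteDimensional K V']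
    (θ : V →ₗ[K] W) (β : U →ₗ[K] W) (η : W →ₗ[K] V')
    (hθ : Function.Injective θ) (hβ : Function.Injective β)
    (hη : Function.Surjective η) (hker : LinearMap.ker η = LinearMap.range β)
    (γ : V →ₗ[K] V') (hγ : γ = η ∘ₗ θ)
    (TV : V →ₗ[K] V) (TU : U →ₗ[K] U) (TW : W →ₗ[K] W)
    (hTV : Function.Bijective TV) (hTU : Function.Bijective TU)
    (hTW : Function.Bijective TW)
    (hcomm1 : θ ∘ₗ TV = TW ∘ₗ θ) (hcomm2 : β ∘ₗ TU = TW ∘ₗ β)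
    (hdim : Module.finrank K U = 1 + Module.finrank K V)
    (htr : LinearMap.trace K V TV = LinearMap.trace K U TU) :
    γ ≠ 0 ∧
      Module.finrank K (LinearMap.ker γ) < Module.finrank K V ∧
      Module.finrank K (V' ⧸ LinearMap.range γ) < Module.finrank K V' := by
  have hγne : γ ≠ 0 := by
    intro hγ0
    -- If γ = 0 then range θ ≤ ker η = range β.
    have hrange : ∀ v : V, θ v ∈ LinearMap.range β := by
      intro v
      rw [← hker, LinearMap.mem_ker]
      have : η (θ v) = γ v := by rw [hγ]; rfl
      rw [this, hγ0]; rfl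
    -- θ factors through β as φ : V → U.
    set eβ : U ≃ₗ[K] LinearMap.range β := LinearEquiv.ofInjective β hβ with heβ
    set φ : V →ₗ[K] U :=
      eβ.symm.toLinearMap ∘ₗ θ.codRestrict (LinearMap.range β) hrange with hφ
    have hβφ : ∀ v, β (φ v) = θ v := by
      intro v
      have h1 : (eβ (φ v) : W) = β (φ v) := LinearEquiv.ofInjective_apply (f := β) (h := hβ) (φ v)
      have h2 : eβ (φ v) = ⟨θ v, hrange v⟩ := by
        simp [hφ, LinearMap.codRestrict]
      rw [h2] at h1
      exact h1.symm
    have hφinj : Function.Injective φ := by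
      intro a b hab
      apply hθ
      rw [← hβφ, ← hβφ, hab]
    have hφcomm : ∀ v, φ (TV v) = TU (φ v) := by
      intro v
      apply hβ
      rw [hβφ]
      have h1 : θ (TV v) = TW (θ v) := LinearMap.congr_fun hcomm1 v
      have h2 : β (TU (φ v)) = TW (β (φ v)) := LinearMap.congr_fun hcomm2 (φ v)
      rw [h1, h2, hβφ]
    set p : Submodule K U := LinearMap.range φ with hpdef
    have hrk : Module.finrank K p = Module.finrank K V :=
      LinearMap.finrank_range_of_inj hφinj
    have hpU : Module.finrank K p < Module.finrank K U := by omega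
    -- TU preserves p.
    have hp : ∀ x ∈ p, TU x ∈ p := by
      rintro x ⟨v, rfl⟩
      exact ⟨TV v, hφcomm v⟩
    -- trace of TU restricted to p equals trace TV.
    set eφ : V ≃ₗ[K] p := LinearEquiv.ofInjective φ hφinj with heφ
    have hres : TU.restrict hp = eφ.conj TV := by
      apply LinearMap.ext
      rintro ⟨x, v, rfl⟩
      have h0 : eφ.symm ⟨φ v, ⟨v, rfl⟩⟩ = v := by
        apply eφ.injective
        rw [eφ.apply_symm_apply]
        rfl
      apply Subtype.ext
      show TU (φ v) = _
      rw [← hφcomm]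
      simp only [LinearEquiv.conj_apply, LinearMap.coe_comp, Function.comp_apply,
        LinearEquiv.coe_coe, h0]
      rfl
    have htrres : LinearMap.trace K p (TU.restrict hp) = LinearMap.trace K V TV := by
      rw [hres]
      exact LinearMap.trace_conj' TV eφ
    -- complement q of p
    obtain ⟨q, hq⟩ := p.exists_isCompl
    have hrkq : Module.finrank K q = 1 := by
      have := Submodule.finrank_add_eq_of_isCompl hq
      omega
    set e : (p × q) ≃ₗ[K] U := Submodule.prodEquivOfIsCompl p q hq with he
    set F : (p × q) →ₗ[K] (p × q) := e.symm.conj TU with hF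
    have htrF : LinearMap.trace K _ F = LinearMap.trace K U TU :=
      LinearMap.trace_conj' TU e.symm
    set A : p →ₗ[K] p := LinearMap.fst K p q ∘ₗ F ∘ₗ LinearMap.inl K p q with hA
    set B : q →ₗ[K] p := LinearMap.fst K p q ∘ₗ F ∘ₗ LinearMap.inr K p q with hB
    set C : p →ₗ[K] q := LinearMap.snd K p q ∘ₗ F ∘ₗ LinearMap.inl K p q with hC
    set D : q →ₗ[K] q := LinearMap.snd K p q ∘ₗ F ∘ₗ LinearMap.inr K p q with hD
    have hFdec : F = LinearMap.inl K p q ∘ₗ A ∘ₗ LinearMap.fst K p q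
        + LinearMap.inl K p q ∘ₗ B ∘ₗ LinearMap.snd K p q
        + LinearMap.inr K p q ∘ₗ C ∘ₗ LinearMap.fst K p q
        + LinearMap.inr K p q ∘ₗ D ∘ₗ LinearMap.snd K p q := by
      apply LinearMap.ext
      rintro ⟨a, b⟩
      have hsplit : (⟨a, b⟩ : p × q) = (⟨a, 0⟩ : p × q) + ⟨0, b⟩ := by simp
      have h1 : F (a, b) = F (a, 0) + F (0, b) := by rw [← map_add]; exact congrArg F hsplit
      simp only [LinearMap.add_apply, LinearMap.coe_comp, Function.comp_apply,
        LinearMap.fst_apply, LinearMap.snd_apply, LinearMap.inl_apply, LinearMap.inr_apply,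
        hA, hB, hC, hD, h1]
      ext
      · simp
      · simp
    -- trace F = trace A + trace D
    have htrAD : LinearMap.trace K _ F = LinearMap.trace K p A + LinearMap.trace K q D := by
      rw [hFdec]
      simp only [map_add]
      have t1 : LinearMap.trace K _ (LinearMap.inl K p q ∘ₗ A ∘ₗ LinearMap.fst K p q)
          = LinearMap.trace K p A := by
        rw [LinearMap.trace_comp_comm', LinearMap.comp_assoc, LinearMap.fst_comp_inl,
          LinearMap.comp_id]
      have t2 : LinearMap.trace K _ (LinearMap.inl K p q ∘ₗ B ∘ₗ LinearMap.snd K p q)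
          = 0 := by
        rw [LinearMap.trace_comp_comm', LinearMap.comp_assoc, LinearMap.snd_comp_inl,
          LinearMap.comp_zero, map_zero]
      have t3 : LinearMap.trace K _ (LinearMap.inr K p q ∘ₗ C ∘ₗ LinearMap.fst K p q)
          = 0 := by
        rw [LinearMap.trace_comp_comm', LinearMap.comp_assoc, LinearMap.fst_comp_inr,
          LinearMap.comp_zero, map_zero]
      have t4 : LinearMap.trace K _ (LinearMap.inr K p q ∘ₗ D ∘ₗ LinearMap.snd K p q)
          = LinearMap.trace K q D := by
        rw [LinearMap.trace_comp_comm', LinearMap.comp_assoc, LinearMap.snd_comp_inr,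
          LinearMap.comp_id]
      rw [t1, t2, t3, t4]
      ring
    -- A is the restriction of TU to p.
    have hAeq : A = TU.restrict hp := by
      apply LinearMap.ext
      intro x
      have h1 : e (x, 0) = (x : U) := by
        rw [Submodule.coe_prodEquivOfIsCompl']
        simp
      have h2 : e.symm (TU (x : U)) = ((⟨TU (x : U), hp x x.2⟩ : p), 0) :=
        Submodule.prodEquivOfIsCompl_symm_apply_left p q hq (⟨TU (x : U), hp x x.2⟩ : p)
      apply Subtype.ext
      show (F (x, 0)).1.1 = TU (x : U)
      rw [hF]
      simp only [LinearEquiv.conj_apply, LinearMap.coe_comp, Function.comp_apply,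
        LinearEquiv.coe_coe, LinearEquiv.symm_symm, h1, h2]
    -- hence trace D = 0
    have htrD : LinearMap.trace K q D = 0 := by
      have : LinearMap.trace K U TU = LinearMap.trace K V TV + LinearMap.trace K q D := by
        rw [← htrF, htrAD, hAeq, htrres]
      rw [← htr] at this
      exact (left_eq_add.mp this)
    -- D = 0 since q is one-dimensional with trace D = 0.
    have hDzero : D = 0 := by
      set b : Module.Basis (Fin 1) K q := Module.basisUnique (Fin 1) hrkq with hb
      have hmat : LinearMap.trace K q D = b.repr (D (b 0)) 0 := by
        rw [LinearMap.trace_eq_matrix_trace K b D]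
        simp [Matrix.trace, LinearMap.toMatrix_apply]
      have hDb : D (b 0) = 0 := by
        have : b.repr (D (b 0)) 0 = 0 := by rw [← hmat, htrD]
        exact Module.basisUnique_repr_eq_zero_iff.mp this
      apply b.ext
      intro i
      rw [Fin.eq_zero i, hDb]
      rfl
    -- But then range TU ≤ p, contradicting surjectivity of TU.
    have hranTU : ∀ u : U, TU u ∈ p := by
      intro u
      have hu : u = ((e.symm u).1 : U) + ((e.symm u).2 : U) := by
        conv_lhs => rw [← e.apply_symm_apply u]
        rw [Submodule.coe_prodEquivOfIsCompl']
      have h1 : TU ((e.symm u).1 : U) ∈ p := hp _ (e.symm u).1.2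
      have h2 : TU ((e.symm u).2 : U) ∈ p := by
        set y := (e.symm u).2 with hy
        have hey : e (0, y) = (y : U) := by
          rw [Submodule.coe_prodEquivOfIsCompl']
          simp
        have hDy : D y = 0 := by rw [hDzero]; rfl
        have : (e.symm (TU (y : U))).2 = 0 := by
          have : D y = (e.symm (TU (e (0, y)))).2 := rfl
          rw [hey] at this
          rw [← this, hDy]
        exact (Submodule.prodEquivOfIsCompl_symm_apply_snd_eq_zero p q hq).mp this
      rw [hu, map_add]
      exact p.add_mem h1 h2
    have hptop : p = ⊤ := by
      rw [eq_top_iff]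
      intro u _
      obtain ⟨u', rfl⟩ := hTU.2 u
      exact hranTU u'
    have : Module.finrank K p = Module.finrank K U := by rw [hptop]; exact finrank_top K U
    omega
  refine ⟨hγne, ?_, ?_⟩
  · apply Submodule.finrank_lt
    intro h
    exact hγne (LinearMap.ker_eq_top.mp h)
  · have h1 := Submodule.finrank_quotient_add_finrank (LinearMap.range γ)
    have h2 : LinearMap.range γ ≠ ⊥ := fun h => hγne (LinearMap.range_eq_bot.mp h)
    have h3 : 0 < Module.finrank K (LinearMap.range γ) := by
      rcases Nat.eq_zero_or_pos (Module.finrank K (LinearMap.range γ)) with h | h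
      · exact absurd (Submodule.finrank_eq_zero.mp h) h2
      · exact h
    omega
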